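/- If t is a prime with n/2 < t < n (so in particular gcd(n, t) = 1 and t odd when n ≥ 5, t ≥ 3, t ≠ n), and q ≥ 2, then gcd(q^t + 1, q^(n-t) + (-1)^n) = q + 1. -/

import Mathlib

theorem gcd_bertrand (n t q : ℕ) (hn : 5 ≤ n) (ht : t.Prime) (htodd : Odd t)
    (h1 : n < 2 * t) (h2 : t < n) (hnt : Nat.gcd n t = 1) (hq : 2 ≤ q) :
    Int.gcd ((q : ℤ) ^ t + 1) ((q : ℤ) ^ (n - t) + (-1) ^ n) = q + 1 := by
  set m := n - t with hm
  have hm1 : 1 ≤ m := by omega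
  have hmn : t + m = n := by omega
  have hcop : Nat.gcd t m = 1 := by
    have := Nat.gcd_sub_self_right (m := t) (n := n) (le_of_lt h2)
    rw [hm, this, Nat.gcd_comm]; exact hnt
  set d := Int.gcd ((q : ℤ) ^ t + 1) ((q : ℤ) ^ m + (-1) ^ n) with hd
  have hAd : (d:ℤ) ∣ (q:ℤ) ^ t + 1 := Int.gcd_dvd_left _ _
  have hBd : (d:ℤ) ∣ (q:ℤ) ^ m + (-1) ^ n := Int.gcd_dvd_right _ _
  -- step 1: in ZMod d, q^t = -1
  have hxt : ((q : ZMod d)) ^ t = -1 := by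
    have := (ZMod.intCast_zmod_eq_zero_iff_dvd _ d).mpr hAd
    push_cast at this
    linear_combination this
  -- step 2: q^2 = 1 in ZMod d
  have hx2 : ((q : ZMod d)) ^ 2 = 1 := by
    have h2t : ((q : ZMod d)) ^ (2 * t) = 1 := by
      rw [mul_comm, pow_mul, hxt]; ring
    rcases Nat.even_or_odd n with he | ho
    · have hBm : ((q : ZMod d)) ^ m = -1 := by
        have := (ZMod.intCast_zmod_eq_zero_iff_dvd _ d).mpr hBd
        rw [he.neg_one_pow] at this
        push_cast at this
        linear_combination this
      have h2m : ((q : ZMod d)) ^ (2 * m) = 1 := by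
        rw [mul_comm, pow_mul, hBm]; ring
      have hord : orderOf ((q : ZMod d)) ∣ Nat.gcd (2 * t) (2 * m) :=
        Nat.dvd_gcd (orderOf_dvd_of_pow_eq_one h2t) (orderOf_dvd_of_pow_eq_one h2m)
      rw [Nat.gcd_mul_left, hcop, mul_one] at hord
      exact orderOf_dvd_iff_pow_eq_one.mp hord
    · have hm_even : Even m := by
        rcases htodd with ⟨k, hk⟩; rcases ho with ⟨j, hj⟩
        exact ⟨j - k, by omega⟩
      have hBm : ((q : ZMod d)) ^ m = 1 := by
        have := (ZMod.intCast_zmod_eq_zero_iff_dvd _ d).mpr hBd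
        rw [ho.neg_one_pow] at this
        push_cast at this
        linear_combination this
      have hord : orderOf ((q : ZMod d)) ∣ Nat.gcd (2 * t) m :=
        Nat.dvd_gcd (orderOf_dvd_of_pow_eq_one h2t) (orderOf_dvd_of_pow_eq_one hBm)
      have hg2 : Nat.gcd (2 * t) m ∣ 2 := by
        rcases hm_even with ⟨j, hj⟩
        have hmm : m = 2 * j := by omega
        rw [hmm, Nat.gcd_mul_left]
        have : Nat.gcd t j ∣ Nat.gcd t m := Nat.dvd_gcd (Nat.gcd_dvd_left _ _)
          ((Nat.gcd_dvd_right t j).trans ⟨2, by omega⟩)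
        rw [hcop] at this
        simp [Nat.eq_one_of_dvd_one this]
      exact orderOf_dvd_iff_pow_eq_one.mp (hord.trans hg2)
  -- step 3: q = -1 in ZMod d, so d ∣ q + 1
  have hq1 : (q : ZMod d) = -1 := by
    rcases htodd with ⟨k, hk⟩
    have : ((q : ZMod d)) ^ t = (q : ZMod d) := by
      rw [hk, pow_add, pow_mul, hx2, one_pow, pow_one, one_mul]
    rw [this] at hxt; exact hxt
  have hdqd : d ∣ q + 1 := by
    have : ((q + 1 : ℕ) : ZMod d) = 0 := by push_cast [hq1]; ring
    exact (ZMod.natCast_eq_zero_iff _ _).mp this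
  -- step 4: q + 1 ∣ d
  have hA : ((q : ℤ) + 1) ∣ (q : ℤ) ^ t + 1 := by
    simpa using Odd.add_dvd_pow_add_pow (q : ℤ) 1 htodd
  have hB : ((q : ℤ) + 1) ∣ (q : ℤ) ^ m + (-1) ^ n := by
    rcases Nat.even_or_odd n with he | ho
    · have hmo : Odd m := by
        rcases htodd with ⟨k, hk⟩; rcases he with ⟨j, hj⟩
        exact ⟨j - k - 1, by omega⟩
      rw [he.neg_one_pow]
      simpa using Odd.add_dvd_pow_add_pow (q : ℤ) 1 hmo
    · have hme : Even m := by
        rcases htodd with ⟨k, hk⟩; rcases ho with ⟨j, hj⟩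
        exact ⟨j - k, by omega⟩
      rw [ho.neg_one_pow]
      rcases hme with ⟨j, hj⟩
      have hmm : m = 2 * j := by omega
      have : ((q : ℤ) ^ 2 - 1) ∣ ((q : ℤ) ^ 2) ^ j - 1 ^ j := sub_dvd_pow_sub_pow _ _ _
      rw [one_pow, ← pow_mul, ← hmm] at this
      exact dvd_trans ⟨(q : ℤ) - 1, by ring⟩ this
  have hqd : q + 1 ∣ d := by
    have : ((q : ℤ) + 1) ∣ (d : ℤ) := Int.dvd_coe_gcd hA hB
    exact_mod_cast this
  exact Nat.dvd_antisymm hdqd hqd
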